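/- For every k ∈ ℕ, the set of pairs (n₁,n₂) ∈ ℤ² whose 2-dimensional canonical Fibonacci representation rep_F(n₁,n₂) has length 2k+1 equals I_k² \ I_{k−1}², where I_k = {i ∈ ℤ : −F_{2k} ≤ i < F_{2k+1}} and I_{−1} = ∅. -/

import Mathlib

/-- Fibonacci sequence with `F 0 = 1`, `F 1 = 1`, `F 2 = 2`. -/
def F : ℕ → ℤ
  | 0 => 1
  | 1 => 1
  | (n+2) => F (n+1) + F n

/-- Numerical value of a binary digit. -/
def bv (x : Bool) : ℤ := if x then 1 else 0

/-- Value of an odd-length binary word `w = w_{2k+1} ⋯ w_1` (most significant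
digit first): `val_F(w) = Σ_{i=1}^{2k} w_i F_i − w_{2k+1} F_{2k}`. -/
def valF (w : List Bool) : ℤ :=
  (∑ i ∈ Finset.range (w.length - 1), bv (w.reverse.getD i false) * F (i+1))
    - bv (w.reverse.getD (w.length - 1) false) * F (w.length - 1)

/-- The word has no factor `11`. -/
def no11 (w : List Bool) : Prop :=
  List.Chain' (fun x y => ¬(x = true ∧ y = true)) w

/-- Words of the canonical representation language: odd length, no factor 11,
not beginning with 000 nor with 101. -/
def IsRep (w : List Bool) : Prop :=
  Odd w.length ∧ no11 w ∧
    ¬ ([false, false, false] <+: w) ∧ ¬ ([true, false, true] <+: w)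

/-- `Ik k = {i ∈ ℤ : −F_{2k} ≤ i < F_{2k+1}}`. -/
def Ik (k : ℕ) : Set ℤ := {i : ℤ | -F (2*k) ≤ i ∧ i < F (2*k+1)}

/-- Shifted version of `Ik` incorporating `I_{−1} = ∅`. -/
def Iext : ℕ → Set ℤ
  | 0 => ∅
  | (k+1) => Ik k

/-- The morphism `h : 0 ↦ 00, 1 ↦ 01, 2 ↦ 10` on single letters. -/
def h3 : Fin 3 → List Bool
  | 0 => [false, false]
  | 1 => [false, true]
  | 2 => [true, false]

lemma F_pos : ∀ n, 0 < F n
  | 0 => by simp [F]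
  | 1 => by simp [F]
  | (n+2) => by simp only [F]; exact add_pos (F_pos (n+1)) (F_pos n)

lemma F_le_succ (n : ℕ) : F n ≤ F (n+1) := by
  cases n with
  | zero => simp [F]
  | succ m => simp only [F]; linarith [F_pos m]

lemma F_mono : Monotone F := monotone_nat_of_le_succ F_le_succ

lemma bv_nonneg (x : Bool) : 0 ≤ bv x := by cases x <;> simp [bv]

def S : List Bool → ℤ
  | [] => 0
  | a :: u => bv a * F (u.length + 1) + S u

lemma S_nonneg : ∀ u : List Bool, 0 ≤ S u
  | [] => le_refl 0
  | a :: u => add_nonneg (mul_nonneg (bv_nonneg a) (F_pos _).le) (S_nonneg u)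

lemma S_lt : ∀ u : List Bool, no11 u → S u < F (u.length + 1)
  | [] => fun _ => by simp [S, F]
  | (false :: u) => fun h => by
      have h1 : S u < F (u.length + 1) := S_lt u h.tail
      have h2 := F_le_succ (u.length + 1)
      simp only [S, bv, List.length_cons, if_false, Bool.false_eq_true]
      linarith
  | [true] => by simp [S, bv, F, no11]
  | (true :: true :: u) => fun h => by
      rw [no11, List.Chain', List.isChain_cons_cons] at h
      exact absurd ⟨rfl, rfl⟩ h.1
  | (true :: false :: u) => fun h => by
      have h1 : S u < F (u.length + 1) := S_lt u (h.tail.tail)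
      simp only [S, bv, List.length_cons, if_true, if_false, Bool.false_eq_true]
      have : F (u.length + 1 + 1 + 1) = F (u.length + 1 + 1) + F (u.length + 1) := rfl
      linarith

lemma sum_eq_S : ∀ u : List Bool,
    (∑ i ∈ Finset.range u.length, bv (u.reverse.getD i false) * F (i+1)) = S u
  | [] => by simp [S]
  | a :: u => by
      rw [List.length_cons, Finset.sum_range_succ]
      have h1 : ∀ i ∈ Finset.range u.length,
          bv ((a :: u).reverse.getD i false) * F (i+1)
            = bv (u.reverse.getD i false) * F (i+1) := by
        intro i hi
        rw [Finset.mem_range] at hi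
        rw [List.reverse_cons, List.getD_append _ _ _ _ (by simpa using hi)]
      rw [Finset.sum_congr rfl h1, sum_eq_S u]
      have h2 : (a :: u).reverse.getD u.length false = a := by
        rw [List.reverse_cons, List.getD_append_right _ _ _ _ (by simp)]
        simp
      rw [h2, S]
      ring

lemma valF_cons (a : Bool) (u : List Bool) :
    valF (a :: u) = S u - bv a * F u.length := by
  rw [valF]
  simp only [List.length_cons, Nat.add_sub_cancel]
  have h1 : ∀ i ∈ Finset.range u.length,
      bv ((a :: u).reverse.getD i false) * F (i+1)
        = bv (u.reverse.getD i false) * F (i+1) := by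
    intro i hi
    rw [Finset.mem_range] at hi
    rw [List.reverse_cons, List.getD_append _ _ _ _ (by simpa using hi)]
  have h2 : (a :: u).reverse.getD u.length false = a := by
    rw [List.reverse_cons, List.getD_append_right _ _ _ _ (by simp)]
    simp
  rw [Finset.sum_congr rfl h1, sum_eq_S u, h2]

lemma Ik_mono {j k : ℕ} (h : j ≤ k) : Ik j ⊆ Ik k := by
  intro n hn
  obtain ⟨h1, h2⟩ := hn
  refine ⟨le_trans ?_ h1, lt_of_lt_of_le h2 (F_mono (by omega))⟩
  have := F_mono (show 2*j ≤ 2*k by omega)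
  linarith

lemma core (k : ℕ) (w : List Bool) (h : IsRep w) (hl : w.length = 2*k+1) :
    valF w ∈ Ik k ∧ ∀ j, k = j + 1 → valF w ∉ Ik j := by
  obtain ⟨ho, hc, h000, h101⟩ := h
  obtain ⟨a, u, rfl⟩ : ∃ a u, w = a :: u := by
    cases w with
    | nil => simp at hl
    | cons a u => exact ⟨a, u, rfl⟩
  have hu : u.length = 2*k := by simpa using hl
  rw [valF_cons, hu]
  have hSnn := S_nonneg u
  have hSlt : S u < F (2*k+1) := by
    have := S_lt u hc.tail
    rwa [hu] at this
  constructor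
  · cases a with
    | false =>
        simp only [bv, if_false, Bool.false_eq_true]
        exact ⟨by linarith [F_pos (2*k)], by linarith⟩
    | true =>
        simp only [bv, if_true]
        exact ⟨by linarith, by linarith [F_pos (2*k)]⟩
  · rintro j rfl
    obtain ⟨b, c, v, rfl⟩ : ∃ b c v, u = b :: c :: v := by
      match u, hu with
      | b :: c :: v, _ => exact ⟨b, c, v, rfl⟩
    have hv : v.length = 2*j := by simp at hu; omega
    have hSvnn := S_nonneg v
    have hSvlt : S v < F (2*j+1) := by
      have := S_lt v hc.tail.tail.tail
      rwa [hv] at this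
    have hF1 : F (2*j+2) = F (2*j+1) + F (2*j) := rfl
    have hF2 : F (2*j+3) = F (2*j+2) + F (2*j+1) := rfl
    have hS : S (b :: c :: v) = bv b * F (2*j+2) + bv c * F (2*j+1) + S v := by
      simp only [S, List.length_cons, hv]
      ring_nf
    intro hmem
    obtain ⟨hm1, hm2⟩ := hmem
    rw [no11, List.Chain', List.isChain_cons_cons] at hc
    cases a with
    | true =>
        have hb : b = false := by
          cases b
          · rfl
          · exact absurd ⟨rfl, rfl⟩ hc.1
        have hcc : c = false := by
          cases c
          · rfl
          · exact absurd (by rw [hb]; exact ⟨v, rfl⟩) h101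
        subst hb; subst hcc
        simp only [bv, if_true, if_false, Bool.false_eq_true] at hm1 hS ⊢
        rw [hS] at hm1
        -- 2*(j+1) = 2*j+2
        have : (2:ℕ)*(j+1) = 2*j+2 := by ring
        rw [this] at hm1
        -- hm1 : -F (2*j) ≤ S v - F (2*j+2)
        linarith
    | false =>
        cases b with
        | true =>
            have hterm : 0 ≤ bv c * F (2*j+1) :=
              mul_nonneg (bv_nonneg c) (F_pos _).le
            simp only [bv, if_true, if_false, Bool.false_eq_true] at hm2 hS hterm
            rw [hS] at hm2
            linarith [F_le_succ (2*j+1)]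
        | false =>
            have hcc : c = true := by
              cases c
              · exact absurd ⟨v, rfl⟩ h000
              · rfl
            subst hcc
            simp only [bv, if_true, if_false, Bool.false_eq_true] at hm2 hS
            rw [hS] at hm2
            linarith

lemma len_le_iff (repF : ℤ → List Bool)
    (hrep : ∀ n : ℤ, IsRep (repF n) ∧ valF (repF n) = n) (n : ℤ) (k : ℕ) :
    (repF n).length ≤ 2*k+1 ↔ n ∈ Ik k := by
  obtain ⟨hr, hv⟩ := hrep n
  obtain ⟨m, hm⟩ := hr.1
  have hcore := core m (repF n) hr (by omega)
  rw [hv] at hcore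
  constructor
  · intro hle
    exact Ik_mono (show m ≤ k by omega) hcore.1
  · intro hmem
    by_contra hgt
    push_neg at hgt
    exact hcore.2 (m-1) (by omega) (Ik_mono (show k ≤ m-1 by omega) hmem)

/-- Pairs `(n₁,n₂) ∈ ℤ²` whose 2-dimensional canonical representation has
length `2k+1` (i.e. `max(|rep_F(n₁)|, |rep_F(n₂)|) = 2k+1`) are exactly those
in `I_k² \ I_{k−1}²`. -/
theorem level_sets_two_dim (repF : ℤ → List Bool)
    (hrep : ∀ n : ℤ, IsRep (repF n) ∧ valF (repF n) = n) (k : ℕ) :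
    {p : ℤ × ℤ | max (repF p.1).length (repF p.2).length = 2*k+1}
      = (Iext (k+1) ×ˢ Iext (k+1)) \ (Iext k ×ˢ Iext k) := by
  ext ⟨n1, n2⟩
  simp only [Set.mem_setOf_eq, Set.mem_diff, Set.mem_prod, Iext]
  obtain ⟨m1, hm1⟩ := (hrep n1).1.1
  obtain ⟨m2, hm2⟩ := (hrep n2).1.1
  have key1 := len_le_iff repF hrep n1
  have key2 := len_le_iff repF hrep n2
  constructor
  · intro h
    have h1 : n1 ∈ Ik k := (key1 k).1 (by omega)
    have h2 : n2 ∈ Ik k := (key2 k).1 (by omega)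
    refine ⟨⟨h1, h2⟩, ?_⟩
    rintro ⟨hq1, hq2⟩
    cases k with
    | zero => exact hq1
    | succ j =>
        have l1 := (key1 j).2 hq1
        have l2 := (key2 j).2 hq2
        omega
  · rintro ⟨⟨h1, h2⟩, hnot⟩
    have l1 := (key1 k).2 h1
    have l2 := (key2 k).2 h2
    by_contra hne
    cases k with
    | zero => omega
    | succ j =>
        exact hnot ⟨(key1 j).1 (by omega), (key2 j).1 (by omega)⟩
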